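/- Under the hypotheses of the AC setting — L_c, L_s, L_c', L_s' real symmetric positive semidefinite n×n matrices with the sandwich inequalities (1/(1+ε))·zᵀL_c z ≤ zᵀL_c' z ≤ (1+ε)·zᵀL_c z and (1/(1+ε))·zᵀL_s z ≤ zᵀL_s' z ≤ (1+ε)·zᵀL_s z for all z ∈ ℝⁿ, ε ≥ 0, ℰ, ℱ real diagonal mn×mn matrices, V = ℰ + iℱ, 𝓛 = block-diagonal of m copies of L_c − iL_s, 𝓛' = block-diagonal of m copies of L_c' − iL_s', 𝓛_c, 𝓛_s block-diagonal of m copies of L_c, L_s, and 𝟙 ∈ ℝ^{mn} the all-ones vector — the following bound holds: ‖V·(conj(𝓛') − conj(𝓛))·conj(V)·𝟙‖² ≤ ε²·( ‖ℰ𝓛_cℰ‖·‖𝟙‖ + ‖ℱ𝓛_cℱ‖·‖𝟙‖ + ‖ℰ‖·‖𝓛_s‖·‖ℱ𝟙‖ + ‖ℱ‖·‖𝓛_s‖·‖ℰ𝟙‖ )² + ε²·( ‖ℰ𝓛_sℰ‖·‖𝟙‖ + ‖ℱ𝓛_sℱ‖·‖𝟙‖ + ‖ℱ‖·‖𝓛_c‖·‖ℰ𝟙‖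 + ‖ℰ‖·‖𝓛_c‖·‖ℱ𝟙‖ )², where conj denotes entrywise complex conjugation, ‖𝟙‖ = √(mn), and ‖·‖ is the Euclidean vector norm / operator 2-norm. -/

import Mathlib

open Matrix
open scoped Matrix.Norms.L2Operator

namespace ACAux

variable {ι : Type*} [Fintype ι] [DecidableEq ι]

noncomputable def ev (v : ι → ℝ) : EuclideanSpace ℝ ι := (WithLp.equiv 2 (ι → ℝ)).symm v

omit [DecidableEq ι] in
lemma ev_norm_sq (v : ι → ℝ) : ‖ev v‖ ^ 2 = v ⬝ᵥ v := by
  rw [EuclideanSpace.norm_eq, Real.sq_sqrt (by positivity)]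
  simp [ev, dotProduct, sq]

omit [DecidableEq ι] in
lemma dotP_self_nonneg (v : ι → ℝ) : 0 ≤ v ⬝ᵥ v := by
  rw [← ev_norm_sq]; positivity

omit [DecidableEq ι] in
lemma inner_ev (u v : ι → ℝ) : (inner ℝ (ev u) (ev v) : ℝ) = u ⬝ᵥ v := by
  simp [ev, PiLp.inner_apply, dotProduct, RCLike.inner_apply, mul_comm]

/-- core: symmetric matrix with quadratic form bound has opnorm bound -/
lemma opNorm_le_of_quad (D : Matrix ι ι ℝ) (hD : Dᵀ = D) (C : ℝ) (hC : 0 ≤ C)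
    (hq : ∀ z : ι → ℝ, |z ⬝ᵥ D *ᵥ z| ≤ C * (z ⬝ᵥ z)) : ‖D‖ ≤ C := by
  have key : ∀ y : ι → ℝ, ‖ev (D *ᵥ y)‖ ≤ C * ‖ev y‖ := by
    intro y
    set w := D *ᵥ y with hw
    set a := ‖ev y‖ with hay
    set b := ‖ev w‖ with hbw
    have ha : 0 ≤ a := norm_nonneg _
    have hb : 0 ≤ b := norm_nonneg _
    have pol : ∀ x : ι → ℝ, 4 * (x ⬝ᵥ w) = ((x + y) ⬝ᵥ D *ᵥ (x + y)) - ((x - y) ⬝ᵥ D *ᵥ (x - y)) := by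
      intro x
      have hsymm : y ⬝ᵥ D *ᵥ x = x ⬝ᵥ w := by
        rw [dotProduct_mulVec y D x, ← mulVec_transpose, hD, dotProduct_comm]
      simp only [mulVec_add, mulVec_sub, dotProduct_add, dotProduct_sub, add_dotProduct,
        sub_dotProduct, ← hw]
      linarith
    have bound : ∀ x : ι → ℝ, |x ⬝ᵥ w| ≤ C / 2 * (x ⬝ᵥ x + y ⬝ᵥ y) := by
      intro x
      have h1 := hq (x + y)
      have h2 := hq (x - y)
      have par : (x + y) ⬝ᵥ (x + y) + (x - y) ⬝ᵥ (x - y) = 2 * (x ⬝ᵥ x) + 2 * (y ⬝ᵥ y) := by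
        simp only [dotProduct_add, dotProduct_sub, add_dotProduct, sub_dotProduct,
          dotProduct_comm y x]
        ring
      have hp := pol x
      rw [abs_le] at h1 h2 ⊢
      have hxx : 0 ≤ x ⬝ᵥ x := dotP_self_nonneg x
      have hyy' : 0 ≤ y ⬝ᵥ y := dotP_self_nonneg y
      constructor <;> nlinarith [h1.1, h1.2, h2.1, h2.2]
    by_cases hb0 : b = 0
    · rw [hb0]; positivity
    · have hbpos : 0 < b := lt_of_le_of_ne hb (Ne.symm hb0)
      have hww : w ⬝ᵥ w = b ^ 2 := (ev_norm_sq w).symm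
      have hyy : y ⬝ᵥ y = a ^ 2 := (ev_norm_sq y).symm
      have hx := bound ((a / b) • w)
      have hdot1 : ((a / b) • w) ⬝ᵥ w = (a / b) * b ^ 2 := by
        rw [smul_dotProduct, hww]; rfl
      have hss : ((a / b) • w) ⬝ᵥ ((a / b) • w) = (a / b) ^ 2 * b ^ 2 := by
        rw [smul_dotProduct, dotProduct_smul, hww, smul_eq_mul, smul_eq_mul]; ring
      rw [hdot1, hss, hyy] at hx
      have hab : |(a / b) * b ^ 2| = a * b := by
        rw [abs_of_nonneg (by positivity)]
        field_simp
      rw [hab] at hx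
      have h2 : (a / b) ^ 2 * b ^ 2 = a ^ 2 := by field_simp
      rw [h2] at hx
      by_cases ha0 : a = 0
      · exfalso
        have h0 : y ⬝ᵥ y = 0 := by rw [hyy, ha0]; ring
        have hy0 : y = 0 := dotProduct_self_eq_zero.mp h0
        have hw0 : w = 0 := by rw [hw, hy0, mulVec_zero]
        have : (0:ℝ) = b ^ 2 := by rw [← hww, hw0, zero_dotProduct]
        nlinarith
      · have hapos : 0 < a := lt_of_le_of_ne ha (Ne.symm ha0)
        nlinarith
  rw [Matrix.l2_opNorm_def]
  apply ContinuousLinearMap.opNorm_le_bound _ hC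
  intro x
  exact key (WithLp.equiv 2 (ι → ℝ) x)

/-- quadratic form of any matrix bounded by opnorm -/
lemma quad_le_opNorm (P : Matrix ι ι ℝ) (z : ι → ℝ) : z ⬝ᵥ P *ᵥ z ≤ ‖P‖ * (z ⬝ᵥ z) := by
  have h1 : z ⬝ᵥ P *ᵥ z = (inner ℝ (ev z) (ev (P *ᵥ z)) : ℝ) := (inner_ev _ _).symm
  have h2 : (inner ℝ (ev z) (ev (P *ᵥ z)) : ℝ) ≤ ‖ev z‖ * ‖ev (P *ᵥ z)‖ := real_inner_le_norm _ _
  have h3 : ‖ev (P *ᵥ z)‖ ≤ ‖P‖ * ‖ev z‖ := P.l2_opNorm_mulVec (ev z)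
  have h4 : ‖ev z‖ ^ 2 = z ⬝ᵥ z := ev_norm_sq z
  nlinarith [norm_nonneg (ev z), norm_nonneg P]

/-- KEY: congruence preserves the sandwich, giving opnorm bound. -/
lemma key_bound (ε : ℝ) (hε : 0 ≤ ε) (M M' S : Matrix ι ι ℝ)
    (hM : Mᵀ = M) (hM' : M'ᵀ = M') (hS : Sᵀ = S)
    (hpsd : ∀ z : ι → ℝ, 0 ≤ z ⬝ᵥ M *ᵥ z)
    (hsand : ∀ z : ι → ℝ, (1 / (1 + ε)) * (z ⬝ᵥ M *ᵥ z) ≤ z ⬝ᵥ M' *ᵥ z ∧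
        z ⬝ᵥ M' *ᵥ z ≤ (1 + ε) * (z ⬝ᵥ M *ᵥ z)) :
    ‖S * (M' - M) * S‖ ≤ ε * ‖S * M * S‖ := by
  have hquadS : ∀ (X : Matrix ι ι ℝ) (z : ι → ℝ),
      z ⬝ᵥ (S * X * S) *ᵥ z = (S *ᵥ z) ⬝ᵥ X *ᵥ (S *ᵥ z) := by
    intro X z
    rw [← mulVec_mulVec, ← mulVec_mulVec, dotProduct_mulVec z, ← mulVec_transpose, hS]
  apply opNorm_le_of_quad
  · rw [transpose_mul, transpose_mul, transpose_sub, hM, hM', hS]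
    rw [Matrix.mul_assoc]
  · positivity
  · intro z
    have h1 := (hsand (S *ᵥ z)).1
    have h2 := (hsand (S *ᵥ z)).2
    have h0 := hpsd (S *ᵥ z)
    have hq := quad_le_opNorm (S * M * S) z
    have hd : z ⬝ᵥ (S * (M' - M) * S) *ᵥ z
        = (S *ᵥ z) ⬝ᵥ M' *ᵥ (S *ᵥ z) - (S *ᵥ z) ⬝ᵥ M *ᵥ (S *ᵥ z) := by
      rw [hquadS, sub_mulVec, dotProduct_sub]
    have hsms : z ⬝ᵥ (S * M * S) *ᵥ z = (S *ᵥ z) ⬝ᵥ M *ᵥ (S *ᵥ z) := hquadS M z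
    rw [hd, abs_le]
    have hden : (0:ℝ) < 1 + ε := by linarith
    constructor
    · have h1' : (S *ᵥ z) ⬝ᵥ M *ᵥ (S *ᵥ z) ≤ (1 + ε) * ((S *ᵥ z) ⬝ᵥ M' *ᵥ (S *ᵥ z)) := by
        rw [div_mul_eq_mul_div, one_mul, div_le_iff₀ hden] at h1
        nlinarith
      have e1 : (S *ᵥ z) ⬝ᵥ M *ᵥ (S *ᵥ z) - (S *ᵥ z) ⬝ᵥ M' *ᵥ (S *ᵥ z)
          ≤ ε * ((S *ᵥ z) ⬝ᵥ M *ᵥ (S *ᵥ z)) := by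
        nlinarith [mul_nonneg (mul_nonneg hε hε) h0]
      rw [← hsms] at e1
      nlinarith
    · have e2 : (S *ᵥ z) ⬝ᵥ M' *ᵥ (S *ᵥ z) - (S *ᵥ z) ⬝ᵥ M *ᵥ (S *ᵥ z)
          ≤ ε * ((S *ᵥ z) ⬝ᵥ M *ᵥ (S *ᵥ z)) := by linarith
      rw [← hsms] at e2
      nlinarith

lemma blockDiag_quad {n m : ℕ} (L : Matrix (Fin n) (Fin n) ℝ) (z : Fin n × Fin m → ℝ) :
    z ⬝ᵥ (blockDiagonal (fun _ : Fin m => L)) *ᵥ z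
      = ∑ k : Fin m, (fun i => z (i, k)) ⬝ᵥ L *ᵥ (fun i => z (i, k)) := by
  simp only [dotProduct, mulVec, Fintype.sum_prod_type, blockDiagonal_apply]
  rw [Finset.sum_comm]
  congr 1
  ext k
  congr 1
  ext i
  rw [Finset.mul_sum]
  simp only [Finset.mul_sum]
  rw [Finset.sum_comm]
  simp [Finset.sum_ite_eq', mul_ite, mul_zero, mul_comm]

lemma expand_VWV (E F A B : Matrix ι ι ℂ) :
    (E + Complex.I • F) * (A + Complex.I • B) * (E - Complex.I • F)
      = (E * A * E + F * A * F + E * B * F - F * B * E)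
        + Complex.I • (E * B * E + F * B * F + F * A * E - E * A * F) := by
  simp only [mul_add, add_mul, mul_sub, sub_mul, smul_mul_assoc, mul_smul_comm, smul_smul,
    Complex.I_mul_I, neg_smul, one_smul, smul_add, smul_sub, neg_one_smul, neg_mul, neg_neg]
  module

lemma conj_map (X Y : Matrix ι ι ℝ) :
    (X.map Complex.ofReal - Complex.I • Y.map Complex.ofReal).map (starRingEnd ℂ)
      = X.map Complex.ofReal + Complex.I • Y.map Complex.ofReal := by
  ext i j
  simp [Matrix.map_apply, Complex.ext_iff]

lemma conjV (E F : Matrix ι ι ℝ) :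
    (E.map Complex.ofReal + Complex.I • F.map Complex.ofReal).map (starRingEnd ℂ)
      = E.map Complex.ofReal - Complex.I • F.map Complex.ofReal := by
  ext i j
  simp [Matrix.map_apply, Complex.ext_iff]

lemma map_comb (e f A B : Matrix ι ι ℝ) :
    (e * A * e + f * A * f + e * B * f - f * B * e).map Complex.ofReal
      = e.map Complex.ofReal * A.map Complex.ofReal * e.map Complex.ofReal
        + f.map Complex.ofReal * A.map Complex.ofReal * f.map Complex.ofReal
        + e.map Complex.ofReal * B.map Complex.ofReal * f.map Complex.ofReal
        - f.map Complex.ofReal * B.map Complex.ofReal * e.map Complex.ofReal := by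
  have h : ∀ X : Matrix ι ι ℝ, X.map Complex.ofReal = X.map Complex.ofRealHom := fun _ => rfl
  have hmul : ∀ X Y : Matrix ι ι ℝ, (X * Y).map Complex.ofReal
      = X.map Complex.ofReal * Y.map Complex.ofReal := by
    intro X Y; rw [h, h, h, Matrix.map_mul]
  have hadd : ∀ X Y : Matrix ι ι ℝ, (X + Y).map Complex.ofReal
      = X.map Complex.ofReal + Y.map Complex.ofReal := by
    intro X Y; ext i j; simp
  have hsub : ∀ X Y : Matrix ι ι ℝ, (X - Y).map Complex.ofReal
      = X.map Complex.ofReal - Y.map Complex.ofReal := by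
    intro X Y; ext i j; simp
  rw [hsub, hadd, hadd, hmul, hmul, hmul, hmul, hmul, hmul, hmul, hmul]

lemma map_comb2 (e f A B : Matrix ι ι ℝ) :
    (e * B * e + f * B * f + f * A * e - e * A * f).map Complex.ofReal
      = e.map Complex.ofReal * B.map Complex.ofReal * e.map Complex.ofReal
        + f.map Complex.ofReal * B.map Complex.ofReal * f.map Complex.ofReal
        + f.map Complex.ofReal * A.map Complex.ofReal * e.map Complex.ofReal
        - e.map Complex.ofReal * A.map Complex.ofReal * f.map Complex.ofReal := by
  have h : ∀ X : Matrix ι ι ℝ, X.map Complex.ofReal = X.map Complex.ofRealHom := fun _ => rfl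
  have hmul : ∀ X Y : Matrix ι ι ℝ, (X * Y).map Complex.ofReal
      = X.map Complex.ofReal * Y.map Complex.ofReal := by
    intro X Y; rw [h, h, h, Matrix.map_mul]
  have hadd : ∀ X Y : Matrix ι ι ℝ, (X + Y).map Complex.ofReal
      = X.map Complex.ofReal + Y.map Complex.ofReal := by
    intro X Y; ext i j; simp
  have hsub : ∀ X Y : Matrix ι ι ℝ, (X - Y).map Complex.ofReal
      = X.map Complex.ofReal - Y.map Complex.ofReal := by
    intro X Y; ext i j; simp
  rw [hsub, hadd, hadd, hmul, hmul, hmul, hmul, hmul, hmul, hmul, hmul]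

lemma mulVec_ones (X Y : Matrix ι ι ℝ) :
    (X.map Complex.ofReal + Complex.I • Y.map Complex.ofReal) *ᵥ (fun _ => (1:ℂ))
      = fun p => ((X *ᵥ (fun _ => (1:ℝ))) p : ℂ) + Complex.I * ((Y *ᵥ (fun _ => (1:ℝ))) p : ℂ) := by
  ext p
  simp [mulVec, dotProduct, Matrix.map_apply, Finset.sum_add_distrib, Finset.mul_sum]

lemma ev_mulVec_le (X : Matrix ι ι ℝ) (v : ι → ℝ) : ‖ev (X *ᵥ v)‖ ≤ ‖X‖ * ‖ev v‖ :=
  X.l2_opNorm_mulVec (ev v)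

end ACAux

/-- The Euclidean norm of a real vector. -/
noncomputable def vnorm {ι : Type*} [Fintype ι] (v : ι → ℝ) : ℝ :=
  Real.sqrt (∑ i, v i ^ 2)

/-- The Euclidean norm of a complex vector. -/
noncomputable def cvnorm {ι : Type*} [Fintype ι] (v : ι → ℂ) : ℝ :=
  Real.sqrt (∑ i, ‖v i‖ ^ 2)

lemma vnorm_eq_ev {ι : Type*} [Fintype ι] (v : ι → ℝ) : vnorm v = ‖ACAux.ev v‖ := by
  unfold vnorm
  rw [show ∑ i, v i ^ 2 = v ⬝ᵥ v by simp [dotProduct, pow_two], ← ACAux.ev_norm_sq,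
    Real.sqrt_sq (norm_nonneg _)]

lemma vnorm_nonneg {ι : Type*} [Fintype ι] (v : ι → ℝ) : 0 ≤ vnorm v := Real.sqrt_nonneg _

lemma cvnorm_split {ι : Type*} [Fintype ι] (x y : ι → ℝ) :
    cvnorm (fun p => ((x p : ℂ) + Complex.I * (y p : ℂ))) ^ 2 = vnorm x ^ 2 + vnorm y ^ 2 := by
  unfold cvnorm vnorm
  rw [Real.sq_sqrt (by positivity), Real.sq_sqrt (by positivity), Real.sq_sqrt (by positivity)]
  have h : ∀ p, ‖(x p : ℂ) + Complex.I * (y p : ℂ)‖ ^ 2 = x p ^ 2 + y p ^ 2 := by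
    intro p
    rw [mul_comm, Complex.sq_norm, Complex.normSq_add_mul_I]
  simp only [h]
  rw [Finset.sum_add_distrib]

/-- main intermediate inequality of the AC theorem:
`‖V(conj(𝓛')−conj(𝓛))conj(V)𝟙‖²` is bounded by the ε-scaled squared sums of the
corresponding operator norms for the unprimed matrices. -/
theorem ac_intermediate_bound
    (n m : ℕ) (hn : 1 ≤ n) (hm : 1 ≤ m) (ε : ℝ) (hε : 0 ≤ ε)
    (Lc Ls Lc' Ls' : Matrix (Fin n) (Fin n) ℝ)
    (hLc : Lc.PosSemidef) (hLs : Ls.PosSemidef) (hLc' : Lc'.PosSemidef) (hLs' : Ls'.PosSemidef)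
    (hsandc : ∀ z : Fin n → ℝ,
      (1 / (1 + ε)) * (z ⬝ᵥ Lc.mulVec z) ≤ z ⬝ᵥ Lc'.mulVec z ∧
      z ⬝ᵥ Lc'.mulVec z ≤ (1 + ε) * (z ⬝ᵥ Lc.mulVec z))
    (hsands : ∀ z : Fin n → ℝ,
      (1 / (1 + ε)) * (z ⬝ᵥ Ls.mulVec z) ≤ z ⬝ᵥ Ls'.mulVec z ∧
      z ⬝ᵥ Ls'.mulVec z ≤ (1 + ε) * (z ⬝ᵥ Ls.mulVec z))
    (E F : Fin n × Fin m → ℝ)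
    (Emat Fmat : Matrix (Fin n × Fin m) (Fin n × Fin m) ℝ)
    (hE : Emat = diagonal E) (hF : Fmat = diagonal F)
    (V : Matrix (Fin n × Fin m) (Fin n × Fin m) ℂ)
    (hV : V = Emat.map Complex.ofReal + Complex.I • Fmat.map Complex.ofReal)
    (𝓛c 𝓛s 𝓛c' 𝓛s' : Matrix (Fin n × Fin m) (Fin n × Fin m) ℝ)
    (h𝓛c : 𝓛c = blockDiagonal (fun _ => Lc)) (h𝓛s : 𝓛s = blockDiagonal (fun _ => Ls))
    (h𝓛c' : 𝓛c' = blockDiagonal (fun _ => Lc')) (h𝓛s' : 𝓛s' = blockDiagonal (fun _ => Ls'))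
    (𝓛 𝓛' : Matrix (Fin n × Fin m) (Fin n × Fin m) ℂ)
    (h𝓛 : 𝓛 = 𝓛c.map Complex.ofReal - Complex.I • 𝓛s.map Complex.ofReal)
    (h𝓛' : 𝓛' = 𝓛c'.map Complex.ofReal - Complex.I • 𝓛s'.map Complex.ofReal) :
    cvnorm ((V * (𝓛'.map (starRingEnd ℂ) - 𝓛.map (starRingEnd ℂ)) *
        V.map (starRingEnd ℂ)).mulVec (fun _ => 1)) ^ 2 ≤
      ε ^ 2 * (‖Emat * 𝓛c * Emat‖ * vnorm (fun _ : Fin n × Fin m => (1 : ℝ)) +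
               ‖Fmat * 𝓛c * Fmat‖ * vnorm (fun _ : Fin n × Fin m => (1 : ℝ)) +
               ‖Emat‖ * ‖𝓛s‖ * vnorm (Fmat.mulVec (fun _ => 1)) +
               ‖Fmat‖ * ‖𝓛s‖ * vnorm (Emat.mulVec (fun _ => 1))) ^ 2 +
      ε ^ 2 * (‖Emat * 𝓛s * Emat‖ * vnorm (fun _ : Fin n × Fin m => (1 : ℝ)) +
               ‖Fmat * 𝓛s * Fmat‖ * vnorm (fun _ : Fin n × Fin m => (1 : ℝ)) +
               ‖Fmat‖ * ‖𝓛c‖ * vnorm (Emat.mulVec (fun _ => 1)) +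
               ‖Emat‖ * ‖𝓛c‖ * vnorm (Fmat.mulVec (fun _ => 1))) ^ 2 := by
  classical
  set A := 𝓛c' - 𝓛c with hA
  set B := 𝓛s' - 𝓛s with hB
  set ReM := Emat * A * Emat + Fmat * A * Fmat + Emat * B * Fmat - Fmat * B * Emat with hReM
  set ImM := Emat * B * Emat + Fmat * B * Fmat + Fmat * A * Emat - Emat * A * Fmat with hImM
  -- symmetry facts
  have real_symm : ∀ {M : Matrix (Fin n) (Fin n) ℝ}, M.IsHermitian → Mᵀ = M := by
    intro M h
    ext i j
    conv_rhs => rw [← h]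
    simp [Matrix.conjTranspose_apply, Matrix.transpose_apply]
  have hblockT : ∀ (L : Matrix (Fin n) (Fin n) ℝ), Lᵀ = L →
      (blockDiagonal (fun _ : Fin m => L))ᵀ = blockDiagonal (fun _ : Fin m => L) := by
    intro L hL
    rw [blockDiagonal_transpose]
    simp [hL]
  have h𝓛cT : 𝓛cᵀ = 𝓛c := by rw [h𝓛c]; exact hblockT _ (real_symm hLc.1)
  have h𝓛sT : 𝓛sᵀ = 𝓛s := by rw [h𝓛s]; exact hblockT _ (real_symm hLs.1)
  have h𝓛c'T : 𝓛c'ᵀ = 𝓛c' := by rw [h𝓛c']; exact hblockT _ (real_symm hLc'.1)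
  have h𝓛s'T : 𝓛s'ᵀ = 𝓛s' := by rw [h𝓛s']; exact hblockT _ (real_symm hLs'.1)
  have hET : Ematᵀ = Emat := by rw [hE]; exact diagonal_transpose E
  have hFT : Fmatᵀ = Fmat := by rw [hF]; exact diagonal_transpose F
  have h1T : (1 : Matrix (Fin n × Fin m) (Fin n × Fin m) ℝ)ᵀ = 1 := Matrix.transpose_one
  -- psd facts at block level
  have hpsd_blk : ∀ (L : Matrix (Fin n) (Fin n) ℝ), L.PosSemidef →
      ∀ z : Fin n × Fin m → ℝ, 0 ≤ z ⬝ᵥ (blockDiagonal (fun _ : Fin m => L)) *ᵥ z := by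
    intro L hL z
    rw [ACAux.blockDiag_quad]
    apply Finset.sum_nonneg
    intro k _
    simpa using hL.dotProduct_mulVec_nonneg (fun i => z (i, k))
  have hpsd_c : ∀ z : Fin n × Fin m → ℝ, 0 ≤ z ⬝ᵥ 𝓛c *ᵥ z := by
    rw [h𝓛c]; exact hpsd_blk _ hLc
  have hpsd_s : ∀ z : Fin n × Fin m → ℝ, 0 ≤ z ⬝ᵥ 𝓛s *ᵥ z := by
    rw [h𝓛s]; exact hpsd_blk _ hLs
  -- sandwich at block level
  have hsand_blk : ∀ (L L' : Matrix (Fin n) (Fin n) ℝ),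
      (∀ z : Fin n → ℝ, (1 / (1 + ε)) * (z ⬝ᵥ L *ᵥ z) ≤ z ⬝ᵥ L' *ᵥ z ∧
        z ⬝ᵥ L' *ᵥ z ≤ (1 + ε) * (z ⬝ᵥ L *ᵥ z)) →
      ∀ z : Fin n × Fin m → ℝ,
        (1 / (1 + ε)) * (z ⬝ᵥ (blockDiagonal (fun _ : Fin m => L)) *ᵥ z)
            ≤ z ⬝ᵥ (blockDiagonal (fun _ : Fin m => L')) *ᵥ z ∧
        z ⬝ᵥ (blockDiagonal (fun _ : Fin m => L')) *ᵥ z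
            ≤ (1 + ε) * (z ⬝ᵥ (blockDiagonal (fun _ : Fin m => L)) *ᵥ z) := by
    intro L L' hs z
    rw [ACAux.blockDiag_quad, ACAux.blockDiag_quad, Finset.mul_sum, Finset.mul_sum]
    exact ⟨Finset.sum_le_sum fun k _ => (hs _).1, Finset.sum_le_sum fun k _ => (hs _).2⟩
  have hsand_c : ∀ z : Fin n × Fin m → ℝ,
      (1 / (1 + ε)) * (z ⬝ᵥ 𝓛c *ᵥ z) ≤ z ⬝ᵥ 𝓛c' *ᵥ z ∧
      z ⬝ᵥ 𝓛c' *ᵥ z ≤ (1 + ε) * (z ⬝ᵥ 𝓛c *ᵥ z) := by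
    rw [h𝓛c, h𝓛c']; exact hsand_blk _ _ hsandc
  have hsand_s : ∀ z : Fin n × Fin m → ℝ,
      (1 / (1 + ε)) * (z ⬝ᵥ 𝓛s *ᵥ z) ≤ z ⬝ᵥ 𝓛s' *ᵥ z ∧
      z ⬝ᵥ 𝓛s' *ᵥ z ≤ (1 + ε) * (z ⬝ᵥ 𝓛s *ᵥ z) := by
    rw [h𝓛s, h𝓛s']; exact hsand_blk _ _ hsands
  -- operator norm bounds via key_bound
  have hEAE : ‖Emat * A * Emat‖ ≤ ε * ‖Emat * 𝓛c * Emat‖ :=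
    ACAux.key_bound ε hε 𝓛c 𝓛c' Emat h𝓛cT h𝓛c'T hET hpsd_c hsand_c
  have hFAF : ‖Fmat * A * Fmat‖ ≤ ε * ‖Fmat * 𝓛c * Fmat‖ :=
    ACAux.key_bound ε hε 𝓛c 𝓛c' Fmat h𝓛cT h𝓛c'T hFT hpsd_c hsand_c
  have hEBE : ‖Emat * B * Emat‖ ≤ ε * ‖Emat * 𝓛s * Emat‖ :=
    ACAux.key_bound ε hε 𝓛s 𝓛s' Emat h𝓛sT h𝓛s'T hET hpsd_s hsand_s
  have hFBF : ‖Fmat * B * Fmat‖ ≤ ε * ‖Fmat * 𝓛s * Fmat‖ :=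
    ACAux.key_bound ε hε 𝓛s 𝓛s' Fmat h𝓛sT h𝓛s'T hFT hpsd_s hsand_s
  have hAn : ‖A‖ ≤ ε * ‖𝓛c‖ := by
    have := ACAux.key_bound ε hε 𝓛c 𝓛c' 1 h𝓛cT h𝓛c'T h1T hpsd_c hsand_c
    simpa [Matrix.one_mul, Matrix.mul_one] using this
  have hBn : ‖B‖ ≤ ε * ‖𝓛s‖ := by
    have := ACAux.key_bound ε hε 𝓛s 𝓛s' 1 h𝓛sT h𝓛s'T h1T hpsd_s hsand_s
    simpa [Matrix.one_mul, Matrix.mul_one] using this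
  -- the matrix identity
  have hprod : V * (𝓛'.map (starRingEnd ℂ) - 𝓛.map (starRingEnd ℂ)) * V.map (starRingEnd ℂ)
      = ReM.map Complex.ofReal + Complex.I • ImM.map Complex.ofReal := by
    rw [h𝓛, h𝓛', ACAux.conj_map, ACAux.conj_map, hV, ACAux.conjV]
    have hmid : (𝓛c'.map Complex.ofReal + Complex.I • 𝓛s'.map Complex.ofReal)
        - (𝓛c.map Complex.ofReal + Complex.I • 𝓛s.map Complex.ofReal)
        = A.map Complex.ofReal + Complex.I • B.map Complex.ofReal := by
      ext p q
      simp [hA, hB, Matrix.map_apply, Matrix.sub_apply, Matrix.add_apply, Matrix.smul_apply,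
        Complex.ext_iff]
    rw [hmid, ACAux.expand_VWV, hReM, hImM, ACAux.map_comb, ACAux.map_comb2]
  set ones : Fin n × Fin m → ℝ := fun _ => (1 : ℝ) with hones
  -- vector norm bounds
  have hsplitR : ACAux.ev (ReM *ᵥ ones)
      = ACAux.ev ((Emat * A * Emat) *ᵥ ones) + ACAux.ev ((Fmat * A * Fmat) *ᵥ ones)
        + ACAux.ev ((Emat * B * Fmat) *ᵥ ones) - ACAux.ev ((Fmat * B * Emat) *ᵥ ones) := by
    rw [hReM]
    simp only [Matrix.add_mulVec, Matrix.sub_mulVec]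
    rfl
  have hsplitI : ACAux.ev (ImM *ᵥ ones)
      = ACAux.ev ((Emat * B * Emat) *ᵥ ones) + ACAux.ev ((Fmat * B * Fmat) *ᵥ ones)
        + ACAux.ev ((Fmat * A * Emat) *ᵥ ones) - ACAux.ev ((Emat * A * Fmat) *ᵥ ones) := by
    rw [hImM]
    simp only [Matrix.add_mulVec, Matrix.sub_mulVec]
    rfl
  -- bound for a sandwiched triple product applied to a vector
  have htriple : ∀ (X Y Z : Matrix (Fin n × Fin m) (Fin n × Fin m) ℝ) (v : Fin n × Fin m → ℝ),
      ‖ACAux.ev ((X * Y * Z) *ᵥ v)‖ ≤ ‖X‖ * ‖Y‖ * ‖ACAux.ev (Z *ᵥ v)‖ := by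
    intro X Y Z v
    rw [show (X * Y * Z) *ᵥ v = X *ᵥ (Y *ᵥ (Z *ᵥ v)) by
      rw [← Matrix.mulVec_mulVec, ← Matrix.mulVec_mulVec]]
    calc ‖ACAux.ev (X *ᵥ (Y *ᵥ (Z *ᵥ v)))‖
        ≤ ‖X‖ * ‖ACAux.ev (Y *ᵥ (Z *ᵥ v))‖ := ACAux.ev_mulVec_le _ _
      _ ≤ ‖X‖ * (‖Y‖ * ‖ACAux.ev (Z *ᵥ v)‖) :=
          mul_le_mul_of_nonneg_left (ACAux.ev_mulVec_le _ _) (norm_nonneg _)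
      _ = ‖X‖ * ‖Y‖ * ‖ACAux.ev (Z *ᵥ v)‖ := by ring
  have hr : vnorm (ReM *ᵥ ones)
      ≤ ε * (‖Emat * 𝓛c * Emat‖ * vnorm ones + ‖Fmat * 𝓛c * Fmat‖ * vnorm ones
          + ‖Emat‖ * ‖𝓛s‖ * vnorm (Fmat *ᵥ ones) + ‖Fmat‖ * ‖𝓛s‖ * vnorm (Emat *ᵥ ones)) := by
    rw [vnorm_eq_ev, hsplitR]
    have t1 : ‖ACAux.ev ((Emat * A * Emat) *ᵥ ones)‖ ≤ ε * ‖Emat * 𝓛c * Emat‖ * ‖ACAux.ev ones‖ :=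
      le_trans (ACAux.ev_mulVec_le _ _) (mul_le_mul_of_nonneg_right hEAE (norm_nonneg _))
    have t2 : ‖ACAux.ev ((Fmat * A * Fmat) *ᵥ ones)‖ ≤ ε * ‖Fmat * 𝓛c * Fmat‖ * ‖ACAux.ev ones‖ :=
      le_trans (ACAux.ev_mulVec_le _ _) (mul_le_mul_of_nonneg_right hFAF (norm_nonneg _))
    have t3 : ‖ACAux.ev ((Emat * B * Fmat) *ᵥ ones)‖
        ≤ ‖Emat‖ * (ε * ‖𝓛s‖) * ‖ACAux.ev (Fmat *ᵥ ones)‖ := by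
      refine le_trans (htriple _ _ _ _) ?_
      have : ‖Emat‖ * ‖B‖ ≤ ‖Emat‖ * (ε * ‖𝓛s‖) :=
        mul_le_mul_of_nonneg_left hBn (norm_nonneg _)
      exact mul_le_mul_of_nonneg_right this (norm_nonneg _)
    have t4 : ‖ACAux.ev ((Fmat * B * Emat) *ᵥ ones)‖
        ≤ ‖Fmat‖ * (ε * ‖𝓛s‖) * ‖ACAux.ev (Emat *ᵥ ones)‖ := by
      refine le_trans (htriple _ _ _ _) ?_
      have : ‖Fmat‖ * ‖B‖ ≤ ‖Fmat‖ * (ε * ‖𝓛s‖) :=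
        mul_le_mul_of_nonneg_left hBn (norm_nonneg _)
      exact mul_le_mul_of_nonneg_right this (norm_nonneg _)
    have htri : ‖ACAux.ev ((Emat * A * Emat) *ᵥ ones) + ACAux.ev ((Fmat * A * Fmat) *ᵥ ones)
        + ACAux.ev ((Emat * B * Fmat) *ᵥ ones) - ACAux.ev ((Fmat * B * Emat) *ᵥ ones)‖
        ≤ ‖ACAux.ev ((Emat * A * Emat) *ᵥ ones)‖ + ‖ACAux.ev ((Fmat * A * Fmat) *ᵥ ones)‖
          + ‖ACAux.ev ((Emat * B * Fmat) *ᵥ ones)‖ + ‖ACAux.ev ((Fmat * B * Emat) *ᵥ ones)‖ := by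
      refine le_trans (norm_sub_le _ _) ?_
      have := norm_add₃_le (a := ACAux.ev ((Emat * A * Emat) *ᵥ ones))
        (b := ACAux.ev ((Fmat * A * Fmat) *ᵥ ones)) (c := ACAux.ev ((Emat * B * Fmat) *ᵥ ones))
      linarith
    rw [vnorm_eq_ev ones, vnorm_eq_ev (Fmat *ᵥ ones), vnorm_eq_ev (Emat *ᵥ ones)]
    calc _ ≤ _ := htri
      _ ≤ ε * ‖Emat * 𝓛c * Emat‖ * ‖ACAux.ev ones‖ + ε * ‖Fmat * 𝓛c * Fmat‖ * ‖ACAux.ev ones‖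
          + ‖Emat‖ * (ε * ‖𝓛s‖) * ‖ACAux.ev (Fmat *ᵥ ones)‖
          + ‖Fmat‖ * (ε * ‖𝓛s‖) * ‖ACAux.ev (Emat *ᵥ ones)‖ := by
        linarith
      _ = ε * (‖Emat * 𝓛c * Emat‖ * ‖ACAux.ev ones‖ + ‖Fmat * 𝓛c * Fmat‖ * ‖ACAux.ev ones‖
          + ‖Emat‖ * ‖𝓛s‖ * ‖ACAux.ev (Fmat *ᵥ ones)‖
          + ‖Fmat‖ * ‖𝓛s‖ * ‖ACAux.ev (Emat *ᵥ ones)‖) := by ring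
  have hs : vnorm (ImM *ᵥ ones)
      ≤ ε * (‖Emat * 𝓛s * Emat‖ * vnorm ones + ‖Fmat * 𝓛s * Fmat‖ * vnorm ones
          + ‖Fmat‖ * ‖𝓛c‖ * vnorm (Emat *ᵥ ones) + ‖Emat‖ * ‖𝓛c‖ * vnorm (Fmat *ᵥ ones)) := by
    rw [vnorm_eq_ev, hsplitI]
    have t1 : ‖ACAux.ev ((Emat * B * Emat) *ᵥ ones)‖ ≤ ε * ‖Emat * 𝓛s * Emat‖ * ‖ACAux.ev ones‖ :=
      le_trans (ACAux.ev_mulVec_le _ _) (mul_le_mul_of_nonneg_right hEBE (norm_nonneg _))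
    have t2 : ‖ACAux.ev ((Fmat * B * Fmat) *ᵥ ones)‖ ≤ ε * ‖Fmat * 𝓛s * Fmat‖ * ‖ACAux.ev ones‖ :=
      le_trans (ACAux.ev_mulVec_le _ _) (mul_le_mul_of_nonneg_right hFBF (norm_nonneg _))
    have t3 : ‖ACAux.ev ((Fmat * A * Emat) *ᵥ ones)‖
        ≤ ‖Fmat‖ * (ε * ‖𝓛c‖) * ‖ACAux.ev (Emat *ᵥ ones)‖ := by
      refine le_trans (htriple _ _ _ _) ?_
      have : ‖Fmat‖ * ‖A‖ ≤ ‖Fmat‖ * (ε * ‖𝓛c‖) :=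
        mul_le_mul_of_nonneg_left hAn (norm_nonneg _)
      exact mul_le_mul_of_nonneg_right this (norm_nonneg _)
    have t4 : ‖ACAux.ev ((Emat * A * Fmat) *ᵥ ones)‖
        ≤ ‖Emat‖ * (ε * ‖𝓛c‖) * ‖ACAux.ev (Fmat *ᵥ ones)‖ := by
      refine le_trans (htriple _ _ _ _) ?_
      have : ‖Emat‖ * ‖A‖ ≤ ‖Emat‖ * (ε * ‖𝓛c‖) :=
        mul_le_mul_of_nonneg_left hAn (norm_nonneg _)
      exact mul_le_mul_of_nonneg_right this (norm_nonneg _)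
    have htri : ‖ACAux.ev ((Emat * B * Emat) *ᵥ ones) + ACAux.ev ((Fmat * B * Fmat) *ᵥ ones)
        + ACAux.ev ((Fmat * A * Emat) *ᵥ ones) - ACAux.ev ((Emat * A * Fmat) *ᵥ ones)‖
        ≤ ‖ACAux.ev ((Emat * B * Emat) *ᵥ ones)‖ + ‖ACAux.ev ((Fmat * B * Fmat) *ᵥ ones)‖
          + ‖ACAux.ev ((Fmat * A * Emat) *ᵥ ones)‖ + ‖ACAux.ev ((Emat * A * Fmat) *ᵥ ones)‖ := by
      refine le_trans (norm_sub_le _ _) ?_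
      have := norm_add₃_le (a := ACAux.ev ((Emat * B * Emat) *ᵥ ones))
        (b := ACAux.ev ((Fmat * B * Fmat) *ᵥ ones)) (c := ACAux.ev ((Fmat * A * Emat) *ᵥ ones))
      linarith
    rw [vnorm_eq_ev ones, vnorm_eq_ev (Fmat *ᵥ ones), vnorm_eq_ev (Emat *ᵥ ones)]
    calc _ ≤ _ := htri
      _ ≤ ε * ‖Emat * 𝓛s * Emat‖ * ‖ACAux.ev ones‖ + ε * ‖Fmat * 𝓛s * Fmat‖ * ‖ACAux.ev ones‖
          + ‖Fmat‖ * (ε * ‖𝓛c‖) * ‖ACAux.ev (Emat *ᵥ ones)‖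
          + ‖Emat‖ * (ε * ‖𝓛c‖) * ‖ACAux.ev (Fmat *ᵥ ones)‖ := by
        linarith
      _ = ε * (‖Emat * 𝓛s * Emat‖ * ‖ACAux.ev ones‖ + ‖Fmat * 𝓛s * Fmat‖ * ‖ACAux.ev ones‖
          + ‖Fmat‖ * ‖𝓛c‖ * ‖ACAux.ev (Emat *ᵥ ones)‖
          + ‖Emat‖ * ‖𝓛c‖ * ‖ACAux.ev (Fmat *ᵥ ones)‖) := by ring
  -- assemble
  rw [hprod, ACAux.mulVec_ones, cvnorm_split]
  have h1 := pow_le_pow_left₀ (vnorm_nonneg _) hr 2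
  have h2 := pow_le_pow_left₀ (vnorm_nonneg _) hs 2
  rw [mul_pow] at h1 h2
  exact add_le_add h1 h2
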